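/- arXiv:2511.19680 — 4 statements merged into one kernel-verified Lean document; each statement's English description precedes it below -/
import Mathlib

section
/- Let ω ∈ [-1,0), δ ∈ (0,1/2), λ_A = 1/2 + δ, λ_B = 1/2 - δ, and for a creator of group i define NE_i(α) = [(2+ω) - 2α·λ_{-i}·(1-ω)]/4 where λ_{-i} is the opposing group's mass. If α̲ = (ω+2)/((1+2δ)(1-ω)) < α < ᾱ = (ω+2)/((1-2δ)(1-ω)), then NE_A(α) > 0 and NE_B(α) < 0. -/
/-- Polarized-creation region: majority net engagement positive, minority negative. -/
theorem stmt5 (ω δ α : ℝ)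
    (hω : ω ∈ Set.Ico (-1 : ℝ) 0) (hδ : δ ∈ Set.Ioo (0 : ℝ) (1 / 2))
    (hlow : (ω + 2) / ((1 + 2 * δ) * (1 - ω)) < α)
    (hhigh : α < (ω + 2) / ((1 - 2 * δ) * (1 - ω))) :
    0 < ((2 + ω) - 2 * α * (1 / 2 - δ) * (1 - ω)) / 4 ∧
    ((2 + ω) - 2 * α * (1 / 2 + δ) * (1 - ω)) / 4 < 0 := by
  obtain ⟨hω1, hω2⟩ := hω
  obtain ⟨hδ1, hδ2⟩ := hδ
  have h1 : (0:ℝ) < (1 + 2 * δ) * (1 - ω) := by nlinarith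
  have h2 : (0:ℝ) < (1 - 2 * δ) * (1 - ω) := by nlinarith
  have ha := (div_lt_iff₀ h1).mp hlow
  have hb := (lt_div_iff₀ h2).mp hhigh
  constructor <;> nlinarith
end

section
/- In the setting of the previous map F_i(P) = clamp((1 + c_i·(1 - Σ_j λ_j s_j P_j))/2), if additionally (max_i |c_i|)·(Σ_j λ_j s_j) < 2, then F is a contraction on [0,1]^n under the sup norm, and hence the equilibrium (fixed point) is unique. -/
open Finset

lemma clamp_lip (a b : ℝ) : |min 1 (max 0 a) - min 1 (max 0 b)| ≤ |a - b| := by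
  calc |min 1 (max 0 a) - min 1 (max 0 b)|
      ≤ max |(1:ℝ) - 1| |max 0 a - max 0 b| := abs_min_sub_min_le_max _ _ _ _
    _ = |max 0 a - max 0 b| := by simp
    _ ≤ max |(0:ℝ) - 0| |a - b| := abs_max_sub_max_le_max _ _ _ _
    _ = |a - b| := by simp

/-- Uniqueness of the rational-expectations equilibrium: under the contraction
condition `(max_i |c_i|)·(Σ_j λ_j s_j) < 2`, the best-response map is a sup-norm
contraction on `[0,1]^n` and the fixed point is unique. -/
theorem stmt8 (n : ℕ) (hn : 1 ≤ n) (c lam s : Fin n → ℝ)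
    (hc : ∀ i, c i ∈ Set.Icc (-1 : ℝ) 1)
    (hlam : ∀ j, 0 ≤ lam j) (hs : ∀ j, s j ∈ Set.Icc (0 : ℝ) 1)
    (hsum : ∑ j, lam j * s j ≤ 1)
    (hcontr : ∀ i, |c i| * (∑ j, lam j * s j) < 2) :
    (∃ K : ℝ, K < 1 ∧ 0 ≤ K ∧
      ∀ P ∈ Set.Icc (0 : Fin n → ℝ) 1, ∀ Q ∈ Set.Icc (0 : Fin n → ℝ) 1,
        ‖(fun i => min 1 (max 0 ((1 + c i * (1 - ∑ j, lam j * s j * P j)) / 2)))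
          - (fun i => min 1 (max 0 ((1 + c i * (1 - ∑ j, lam j * s j * Q j)) / 2)))‖
          ≤ K * ‖P - Q‖) ∧
    (∃! P : Fin n → ℝ, P ∈ Set.Icc (0 : Fin n → ℝ) 1 ∧
      (fun i => min 1 (max 0 ((1 + c i * (1 - ∑ j, lam j * s j * P j)) / 2))) = P) := by
  set F : (Fin n → ℝ) → (Fin n → ℝ) :=
    fun P i => min 1 (max 0 ((1 + c i * (1 - ∑ j, lam j * s j * P j)) / 2)) with hF
  set S : ℝ := ∑ j, lam j * s j with hSdef
  have hls : ∀ j, 0 ≤ lam j * s j := fun j => mul_nonneg (hlam j) (hs j).1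
  have hS0 : 0 ≤ S := Finset.sum_nonneg fun j _ => hls j
  set K : ℝ := S / 2 with hKdef
  have hK0 : 0 ≤ K := by positivity
  have hK1 : K < 1 := by rw [hKdef]; linarith
  -- key Lipschitz estimate (holds globally)
  have key : ∀ P Q : Fin n → ℝ, ‖F P - F Q‖ ≤ K * ‖P - Q‖ := by
    intro P Q
    have h0 : 0 ≤ K * ‖P - Q‖ := mul_nonneg hK0 (norm_nonneg _)
    rw [pi_norm_le_iff_of_nonneg h0]
    intro i
    have hdiff : (1 + c i * (1 - ∑ j, lam j * s j * P j)) / 2 -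
        (1 + c i * (1 - ∑ j, lam j * s j * Q j)) / 2
        = c i * (∑ j, lam j * s j * (Q j - P j)) / 2 := by
      have hsplit : ∑ j, lam j * s j * (Q j - P j)
          = (∑ j, lam j * s j * Q j) - ∑ j, lam j * s j * P j := by
        rw [← Finset.sum_sub_distrib]
        exact Finset.sum_congr rfl fun j _ => by ring
      rw [hsplit]; ring
    have hsum_le : |∑ j, lam j * s j * (Q j - P j)| ≤ S * ‖P - Q‖ := by
      calc |∑ j, lam j * s j * (Q j - P j)|
          ≤ ∑ j, |lam j * s j * (Q j - P j)| := Finset.abs_sum_le_sum_abs _ _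
        _ ≤ ∑ j, lam j * s j * ‖P - Q‖ := by
            apply Finset.sum_le_sum
            intro j _
            rw [abs_mul, abs_of_nonneg (hls j)]
            apply mul_le_mul_of_nonneg_left _ (hls j)
            have := norm_le_pi_norm (P - Q) j
            simpa [Pi.sub_apply, Real.norm_eq_abs, abs_sub_comm] using this
        _ = S * ‖P - Q‖ := by rw [← Finset.sum_mul]
    have hc1 : |c i| ≤ 1 := abs_le.2 ⟨(hc i).1, (hc i).2⟩
    calc ‖(F P - F Q) i‖ = |F P i - F Q i| := by simp [Real.norm_eq_abs]
      _ ≤ |(1 + c i * (1 - ∑ j, lam j * s j * P j)) / 2 -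
            (1 + c i * (1 - ∑ j, lam j * s j * Q j)) / 2| := clamp_lip _ _
      _ = |c i| * |∑ j, lam j * s j * (Q j - P j)| / 2 := by
            rw [hdiff, abs_div, abs_mul]; simp
      _ ≤ 1 * (S * ‖P - Q‖) / 2 := by
            gcongr <;> first
              | exact abs_nonneg _
              | exact hc1
              | exact hsum_le
      _ = K * ‖P - Q‖ := by rw [hKdef]; ring
  have hmaps : ∀ P : Fin n → ℝ, F P ∈ Set.Icc (0 : Fin n → ℝ) 1 := by
    intro P
    constructor
    · intro i
      exact le_min zero_le_one (le_max_left _ _)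
    · intro i
      exact min_le_left _ _
  refine ⟨⟨K, hK1, hK0, fun P _ Q _ => key P Q⟩, ?_⟩
  -- Banach fixed point on the closed set [0,1]^n
  have hclosed : IsClosed (Set.Icc (0 : Fin n → ℝ) 1) := isClosed_Icc
  haveI : CompleteSpace (Set.Icc (0 : Fin n → ℝ) 1) := hclosed.completeSpace_coe
  haveI : Nonempty (Set.Icc (0 : Fin n → ℝ) 1) :=
    ⟨⟨0, le_refl _, fun i => zero_le_one⟩⟩
  set g : (Set.Icc (0 : Fin n → ℝ) 1) → (Set.Icc (0 : Fin n → ℝ) 1) :=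
    fun x => ⟨F x.1, hmaps x.1⟩ with hg
  have hKnn : (0:ℝ) ≤ K := hK0
  have hlip : LipschitzWith ⟨K, hK0⟩ g := by
    apply LipschitzWith.of_dist_le_mul
    intro x y
    rw [Subtype.dist_eq, Subtype.dist_eq, dist_eq_norm, dist_eq_norm]
    exact key x.1 y.1
  have hcw : ContractingWith ⟨K, hK0⟩ g := ⟨by exact_mod_cast hK1, hlip⟩
  obtain ⟨x, hx⟩ := hcw.exists_fixedPoint (Classical.arbitrary _)
    (edist_ne_top _ _)
  refine ⟨x.1, ⟨x.2, ?_⟩, ?_⟩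
  · have : g x = x := hx.1
    exact congrArg Subtype.val this
  · rintro Q ⟨hQmem, hQfix⟩
    -- uniqueness from contraction
    have h1 : ‖Q - x.1‖ ≤ K * ‖Q - x.1‖ := by
      have hxfix : F x.1 = x.1 := congrArg Subtype.val hx.1
      have hQfix' : F Q = Q := hQfix
      calc ‖Q - x.1‖ = ‖F Q - F x.1‖ := by rw [hQfix', hxfix]
        _ ≤ K * ‖Q - x.1‖ := key Q x.1
    by_contra hne
    have hpos : 0 < ‖Q - x.1‖ := by
      rw [norm_pos_iff]
      intro h
      exact hne (by rw [← sub_eq_zero]; exact h)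
    nlinarith
end

section
/- Fix ω ∈ [-1,0), α ∈ (0,1], and δ ∈ (0,1/2). Define λ̲_N = 1 - (ω+2)/(α(1-ω)(1-2δ)) and λ̄_N = 1 - (ω+2)/(α(1-ω)(1+2δ)). Then λ̲_N < λ̄_N < 1, and for a partisan non-toxic creator of the majority group A with net engagement NE_A(λ_N) = [(2+ω) - 2α(1-λ_N)(1/2-δ)(1-ω)]/4 and of the minority group B with NE_B(λ_N) = [(2+ω) - 2α(1-λ_N)(1/2+δ)(1-ω)]/4, we have: NE_A(λ_N) > 0 iff λ_N > λ̲_N, and NE_B(λ_N) > 0 iff λ_N > λ̄_N. Consequently, for λ_N strictly between λ̲_N and λ̄_N, NE_A > 0 > NE_B. -/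
lemma aux13 (ω c l : ℝ) (hc : 0 < c) :
    (0 < ((2 + ω) - c * (1 - l)) / 4 ↔ 1 - (ω + 2) / c < l) := by
  rw [div_pos_iff]
  constructor
  · rintro (⟨h, -⟩ | ⟨-, h⟩)
    · have : 1 - l < (ω + 2) / c := by
        rw [lt_div_iff₀ hc]; nlinarith
      linarith
    · linarith
  · intro h
    left
    constructor
    · have : 1 - l < (ω + 2) / c := by linarith
      rw [lt_div_iff₀ hc] at this; nlinarith
    · norm_num

/-- Neutral-user thresholds and the sign pattern of partisan net engagements. -/
theorem stmt13 (ω α δ : ℝ)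
    (hω : ω ∈ Set.Ico (-1 : ℝ) 0) (hα : α ∈ Set.Ioc (0 : ℝ) 1)
    (hδ : δ ∈ Set.Ioo (0 : ℝ) (1 / 2)) :
    (1 - (ω + 2) / (α * (1 - ω) * (1 - 2 * δ))
      < 1 - (ω + 2) / (α * (1 - ω) * (1 + 2 * δ))) ∧
    (1 - (ω + 2) / (α * (1 - ω) * (1 + 2 * δ)) < 1) ∧
    (∀ lamN : ℝ,
      (0 < ((2 + ω) - 2 * α * (1 - lamN) * (1 / 2 - δ) * (1 - ω)) / 4 ↔
        1 - (ω + 2) / (α * (1 - ω) * (1 - 2 * δ)) < lamN)) ∧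
    (∀ lamN : ℝ,
      (0 < ((2 + ω) - 2 * α * (1 - lamN) * (1 / 2 + δ) * (1 - ω)) / 4 ↔
        1 - (ω + 2) / (α * (1 - ω) * (1 + 2 * δ)) < lamN)) ∧
    (∀ lamN : ℝ,
      1 - (ω + 2) / (α * (1 - ω) * (1 - 2 * δ)) < lamN →
      lamN < 1 - (ω + 2) / (α * (1 - ω) * (1 + 2 * δ)) →
      0 < ((2 + ω) - 2 * α * (1 - lamN) * (1 / 2 - δ) * (1 - ω)) / 4 ∧
      ((2 + ω) - 2 * α * (1 - lamN) * (1 / 2 + δ) * (1 - ω)) / 4 < 0) := by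
  obtain ⟨hω1, hω0⟩ := hω
  obtain ⟨hα0, hα1⟩ := hα
  obtain ⟨hδ0, hδ1⟩ := hδ
  have hc1 : 0 < α * (1 - ω) * (1 - 2 * δ) := mul_pos (mul_pos hα0 (by linarith)) (by linarith)
  have hc2 : 0 < α * (1 - ω) * (1 + 2 * δ) := mul_pos (mul_pos hα0 (by linarith)) (by linarith)
  have hω2 : 0 < ω + 2 := by linarith
  have hdiv : (ω + 2) / (α * (1 - ω) * (1 + 2 * δ))
      < (ω + 2) / (α * (1 - ω) * (1 - 2 * δ)) := by
    apply div_lt_div_of_pos_left hω2 hc1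
    nlinarith
  have hA : ∀ l : ℝ, (0 < ((2 + ω) - 2 * α * (1 - l) * (1 / 2 - δ) * (1 - ω)) / 4 ↔
      1 - (ω + 2) / (α * (1 - ω) * (1 - 2 * δ)) < l) := by
    intro l
    have := aux13 ω (α * (1 - ω) * (1 - 2 * δ)) l hc1
    rw [← this]; constructor <;> intro h <;> (ring_nf at h ⊢; linarith)
  have hB : ∀ l : ℝ, (0 < ((2 + ω) - 2 * α * (1 - l) * (1 / 2 + δ) * (1 - ω)) / 4 ↔
      1 - (ω + 2) / (α * (1 - ω) * (1 + 2 * δ)) < l) := by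
    intro l
    have := aux13 ω (α * (1 - ω) * (1 + 2 * δ)) l hc2
    rw [← this]; constructor <;> intro h <;> (ring_nf at h ⊢; linarith)
  refine ⟨by linarith, ?_, hA, hB, ?_⟩
  · have : 0 < (ω + 2) / (α * (1 - ω) * (1 + 2 * δ)) := div_pos hω2 hc2
    linarith
  · intro l h1 h2
    refine ⟨(hA l).mpr h1, ?_⟩
    by_contra h
    push_neg at h
    rcases lt_or_eq_of_le h with h' | h'
    · exact absurd ((hB l).mp h') (by linarith)
    · -- equality case
      have heq : ω + 2 = (1 - l) * (α * (1 - ω) * (1 + 2 * δ)) := by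
        linear_combination -4 * h'
      have hl : (ω + 2) / (α * (1 - ω) * (1 + 2 * δ)) = 1 - l := by
        rw [div_eq_iff hc2.ne']; exact heq
      linarith
end

section
/- Fix ω ∈ [-1,0), δ ∈ (0,1/2), λ_A = 1/2+δ, λ_B = 1/2-δ, and personalization level φ ∈ [0,1). The minority non-toxic creator's net engagement under personalization, NE_B(φ, α) = λ_B·(2+ω)/4 + (1-φ)·λ_A·[(2+ω) - 2α(1-ω)]/4, is positive if and only if α < A(φ) := (2+ω)·(λ_B + (1-φ)λ_A)/(2(1-φ)λ_A(1-ω)); moreover A(φ) is strictly increasing in φ on [0,1). -/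
/-- Personalization protects the minority: sign condition of minority net
engagement and strict monotonicity of the critical threshold `A(φ)`. -/
theorem stmt14 (ω δ : ℝ)
    (hω : ω ∈ Set.Ico (-1 : ℝ) 0) (hδ : δ ∈ Set.Ioo (0 : ℝ) (1 / 2)) :
    (∀ φ ∈ Set.Ico (0 : ℝ) 1, ∀ α : ℝ,
      (0 < (1 / 2 - δ) * ((2 + ω) / 4)
          + (1 - φ) * (1 / 2 + δ) * (((2 + ω) - 2 * α * (1 - ω)) / 4) ↔
        α < (2 + ω) * ((1 / 2 - δ) + (1 - φ) * (1 / 2 + δ))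
              / (2 * (1 - φ) * (1 / 2 + δ) * (1 - ω)))) ∧
    StrictMonoOn
      (fun φ : ℝ => (2 + ω) * ((1 / 2 - δ) + (1 - φ) * (1 / 2 + δ))
        / (2 * (1 - φ) * (1 / 2 + δ) * (1 - ω)))
      (Set.Ico (0 : ℝ) 1) := by
  obtain ⟨hω1, hω0⟩ := hω
  obtain ⟨hδ0, hδ2⟩ := hδ
  constructor
  · intro φ hφ α
    obtain ⟨hφ0, hφ1⟩ := hφ
    have hD : 0 < 2 * (1 - φ) * (1 / 2 + δ) * (1 - ω) :=
      mul_pos (mul_pos (mul_pos two_pos (by linarith)) (by linarith)) (by linarith)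
    rw [lt_div_iff₀ hD]
    constructor
    · intro h; nlinarith
    · intro h; nlinarith
  · intro a ha b hb hab
    obtain ⟨ha0, ha1⟩ := ha
    obtain ⟨hb0, hb1⟩ := hb
    have hDa : 0 < 2 * (1 - a) * (1 / 2 + δ) * (1 - ω) :=
      mul_pos (mul_pos (mul_pos two_pos (by linarith)) (by linarith)) (by linarith)
    have hDb : 0 < 2 * (1 - b) * (1 / 2 + δ) * (1 - ω) :=
      mul_pos (mul_pos (mul_pos two_pos (by linarith)) (by linarith)) (by linarith)
    simp only
    rw [div_lt_div_iff₀ hDa hDb]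
    nlinarith [mul_pos (sub_pos.mpr hab) (mul_pos (by nlinarith : (0:ℝ) < 1/2 - δ) (by nlinarith : (0:ℝ) < (2+ω)*(1-ω)))]
end
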